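/- arXiv:2512.07256 — 2 statements merged into one kernel-verified Lean document; each statement's English description precedes it below -/
import Mathlib

section
/- Let q be a prime power and m ≥ 2 an integer. Then for ℓ = 1 we have ⌊((q^{2m}-1)/(q²-1) - 1)/q^{2m-2}⌋ ≥ 1, and (q^{2m}-1)/(q²-1) - 2·(1 + log_{q²}(1 + ((q^{2m}-1)/(q²-1) - q^{2m-2})(q²-1))) = (q^{2m}-1)/(q²-1) - 2m. -/
/-- For a prime power `q` and `m ≥ 2`: at `ℓ = 1` we have
`⌊((q^{2m}-1)/(q²-1) - 1)/q^{2m-2}⌋ ≥ 1`, and the pure Sphere-packing-like bound for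
the quantum Hamming LRC is attained with equality:
`(q^{2m}-1)/(q²-1) - 2(1 + log_{q²}(1 + ((q^{2m}-1)/(q²-1) - q^{2m-2})(q²-1)))
  = (q^{2m}-1)/(q²-1) - 2m`. -/
theorem quantum_hamming_sphere_packing_equality (q m : ℕ) (hq : IsPrimePow q)
    (hm : 2 ≤ m) :
    1 ≤ ((q ^ (2 * m) - 1) / (q ^ 2 - 1) - 1) / q ^ (2 * m - 2) ∧
    (((q ^ (2 * m) - 1) / (q ^ 2 - 1) : ℕ) : ℝ) -
        2 * (1 + Real.logb ((q : ℝ) ^ 2)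
          (1 + ((((q ^ (2 * m) - 1) / (q ^ 2 - 1) : ℕ) : ℝ) - (q : ℝ) ^ (2 * m - 2)) *
            ((q : ℝ) ^ 2 - 1))) =
      (((q ^ (2 * m) - 1) / (q ^ 2 - 1) : ℕ) : ℝ) - 2 * m := by
  have hq2 : 2 ≤ q := hq.two_le
  have hq21 : 1 < q ^ 2 := by nlinarith
  -- the quotient equals the geometric sum
  have key : (q ^ 2) ^ m - 1 = (∑ i ∈ Finset.range m, (q ^ 2) ^ i) * (q ^ 2 - 1) := by
    have h1 : 1 ≤ (q ^ 2) ^ m := Nat.one_le_pow _ _ (by positivity)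
    have h2 : 1 ≤ q ^ 2 := le_of_lt hq21
    zify [h1, h2]
    rw [geom_sum_mul]
  have hS : (q ^ (2 * m) - 1) / (q ^ 2 - 1) = ∑ i ∈ Finset.range m, (q ^ 2) ^ i := by
    rw [pow_mul]
    exact Nat.div_eq_of_eq_mul_left (by omega) (by rw [key])
  obtain ⟨k, rfl⟩ : ∃ k, m = k + 2 := ⟨m - 2, by omega⟩
  have hexp : 2 * (k + 2) - 2 = 2 * (k + 1) := by omega
  constructor
  · rw [hS, Nat.one_le_div_iff (by positivity)]
    have h1 : (q ^ 2) ^ (k + 1) + (q ^ 2) ^ 0 ≤ ∑ i ∈ Finset.range (k + 2), (q ^ 2) ^ i := by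
      rw [Finset.sum_range_succ]
      have h0 : (q ^ 2) ^ 0 ≤ ∑ i ∈ Finset.range (k + 1), (q ^ 2) ^ i :=
        Finset.single_le_sum (fun i _ => Nat.zero_le _) (Finset.mem_range.mpr (by omega))
      omega
    have : q ^ (2 * (k + 2) - 2) = (q ^ 2) ^ (k + 1) := by rw [hexp, pow_mul]
    simp only [pow_zero] at h1
    omega
  · have hqr : (1 : ℝ) < (q : ℝ) ^ 2 := by
      have : (1 : ℝ) < (q : ℝ) := by exact_mod_cast hq.one_lt
      nlinarith
    have hNcast : (((q ^ (2 * (k + 2)) - 1) / (q ^ 2 - 1) : ℕ) : ℝ) =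
        ∑ i ∈ Finset.range (k + 2), ((q : ℝ) ^ 2) ^ i := by
      rw [hS]; push_cast; rfl
    have hexpr : (q : ℝ) ^ (2 * (k + 2) - 2) = ((q : ℝ) ^ 2) ^ (k + 1) := by
      rw [hexp, pow_mul]
    have e1 : (((q ^ (2 * (k + 2)) - 1) / (q ^ 2 - 1) : ℕ) : ℝ) - (q : ℝ) ^ (2 * (k + 2) - 2) =
        ∑ i ∈ Finset.range (k + 1), ((q : ℝ) ^ 2) ^ i := by
      rw [hNcast, hexpr, Finset.sum_range_succ]; ring
    have e2 : 1 + ((((q ^ (2 * (k + 2)) - 1) / (q ^ 2 - 1) : ℕ) : ℝ) -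
        (q : ℝ) ^ (2 * (k + 2) - 2)) * ((q : ℝ) ^ 2 - 1) = ((q : ℝ) ^ 2) ^ (k + 1) := by
      rw [e1, geom_sum_mul]; ring
    rw [e2, Real.logb_pow, Real.logb_self_eq_one hqr]
    push_cast
    ring
end

section
/- Let q ≥ 2, r ≥ 1, t with 1 ≤ t ≤ r, and n, κ, δ positive integers. Suppose n ≥ ℓ(r+1) + Σ_{i=0}^{k-ℓr-1} ⌈δ/q^{2i}⌉ holds for ℓ = (n+κ)/(2r) - 1 (assumed to be a nonnegative integer) and k = (n+κ)/2 (assumed a positive integer with k - ℓr = r). Then n ≥ ((r+1)/(2r))·n + ((r+1)/(2r))·κ + ((q^{2t}-1)/(q^{2t}-q^{2t-2}))·δ - (t+1), as rational numbers. -/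
open Finset

private lemma geom_aux (a : ℚ) (ha : a ≠ 0) (ha1 : a ≠ 1) (m : ℕ) :
    ∑ i ∈ Finset.range (m + 1), a⁻¹ ^ i = (a ^ (m + 1) - 1) / (a ^ m * (a - 1)) := by
  induction m with
  | zero =>
    have : a - 1 ≠ 0 := sub_ne_zero.mpr ha1
    field_simp
    simp
  | succ s ih =>
    rw [Finset.sum_range_succ, ih]
    have h1 : a - 1 ≠ 0 := sub_ne_zero.mpr ha1
    have h2 : a ^ s ≠ 0 := pow_ne_zero _ ha
    have h3 : a ^ (s + 1) ≠ 0 := pow_ne_zero _ ha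
    rw [inv_pow]
    field_simp
    ring

/-- Asymptotic pure Griesmer-like bound derivation: if `ℓ = (n+κ)/(2r) - 1` and
`k = (n+κ)/2` are nonnegative integers with `k - ℓr = r`, and
`n ≥ ℓ(r+1) + Σ_{i=0}^{k-ℓr-1} ⌈δ/q^{2i}⌉`, then for every `1 ≤ t ≤ r`,
`n ≥ ((r+1)/(2r))·n + ((r+1)/(2r))·κ + ((q^{2t}-1)/(q^{2t}-q^{2t-2}))·δ - (t+1)`. -/
theorem pure_griesmer_asymptotic_form (q r t n κ δ ℓ k : ℕ)
    (hq : 2 ≤ q) (hr : 1 ≤ r) (ht1 : 1 ≤ t) (htr : t ≤ r)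
    (hn : 0 < n) (hκ : 0 < κ) (hδ : 0 < δ)
    (hℓ : (ℓ : ℚ) = ((n : ℚ) + κ) / (2 * r) - 1)
    (hk : (k : ℚ) = ((n : ℚ) + κ) / 2)
    (hkr : k - ℓ * r = r)
    (hbound : (n : ℤ) ≥ (ℓ : ℤ) * (r + 1) +
      ∑ i ∈ range (k - ℓ * r), ⌈(δ : ℚ) / (q : ℚ) ^ (2 * i)⌉) :
    (n : ℚ) ≥ (((r : ℚ) + 1) / (2 * r)) * n + (((r : ℚ) + 1) / (2 * r)) * κ +
      (((q : ℚ) ^ (2 * t) - 1) / ((q : ℚ) ^ (2 * t) - (q : ℚ) ^ (2 * t - 2))) * δ -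
      (t + 1) := by
  obtain ⟨s, rfl⟩ : ∃ s, t = s + 1 := ⟨t - 1, by omega⟩
  rw [hkr] at hbound
  set a : ℚ := (q : ℚ) ^ 2 with ha
  have hq1 : (1 : ℚ) < (q : ℚ) := by exact_mod_cast lt_of_lt_of_le one_lt_two hq
  have ha1 : (1 : ℚ) < a := one_lt_pow₀ hq1 two_ne_zero
  have ha0 : (0 : ℚ) < a := lt_trans one_pos ha1
  have hδ0 : (0 : ℚ) < (δ : ℚ) := by exact_mod_cast hδ
  have hr0 : (0 : ℚ) < (r : ℚ) := by exact_mod_cast hr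
  -- cast the bound to ℚ
  have hb : (n : ℚ) ≥ (ℓ : ℚ) * (r + 1) +
      ∑ i ∈ range r, (⌈(δ : ℚ) / (q : ℚ) ^ (2 * i)⌉ : ℚ) := by
    have := hbound
    push_cast at this ⊢
    exact_mod_cast this
  -- split the sum
  have hsplit : ∑ i ∈ range r, (⌈(δ : ℚ) / (q : ℚ) ^ (2 * i)⌉ : ℚ) =
      (∑ i ∈ range (s + 1), (⌈(δ : ℚ) / (q : ℚ) ^ (2 * i)⌉ : ℚ)) +
      ∑ i ∈ Ico (s + 1) r, (⌈(δ : ℚ) / (q : ℚ) ^ (2 * i)⌉ : ℚ) := by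
    rw [range_eq_Ico, ← Finset.sum_Ico_consecutive _ (Nat.zero_le (s + 1)) htr,
      ← range_eq_Ico]
  -- lower bound first part by geometric sum
  have hpow : ∀ i : ℕ, (q : ℚ) ^ (2 * i) = a ^ i := fun i => by
    rw [ha, ← pow_mul]
  have h1 : (∑ i ∈ range (s + 1), (⌈(δ : ℚ) / (q : ℚ) ^ (2 * i)⌉ : ℚ)) ≥
      ∑ i ∈ range (s + 1), (δ : ℚ) / a ^ i := by
    apply Finset.sum_le_sum
    intro i _
    rw [← hpow]
    exact Int.le_ceil _
  -- lower bound second part by count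
  have h2 : (∑ i ∈ Ico (s + 1) r, (⌈(δ : ℚ) / (q : ℚ) ^ (2 * i)⌉ : ℚ)) ≥
      (r : ℚ) - (s + 1) := by
    have : ∀ i ∈ Ico (s + 1) r, (1 : ℚ) ≤ (⌈(δ : ℚ) / (q : ℚ) ^ (2 * i)⌉ : ℚ) := by
      intro i _
      have hpos : (0 : ℚ) < (δ : ℚ) / (q : ℚ) ^ (2 * i) :=
        div_pos hδ0 (by positivity)
      have : (1 : ℤ) ≤ ⌈(δ : ℚ) / (q : ℚ) ^ (2 * i)⌉ := Int.ceil_pos.mpr hpos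
      exact_mod_cast this
    calc (r : ℚ) - (s + 1) = ((Ico (s + 1) r).card : ℚ) := by
          rw [Nat.card_Ico]
          have : s + 1 ≤ r := htr
          push_cast [Nat.cast_sub this]
          ring
      _ = ∑ i ∈ Ico (s + 1) r, (1 : ℚ) := by rw [Finset.sum_const, nsmul_eq_mul, mul_one]
      _ ≤ _ := Finset.sum_le_sum this
  -- geometric sum value
  have hgeom : ∑ i ∈ range (s + 1), (δ : ℚ) / a ^ i =
      (δ : ℚ) * ((a ^ (s + 1) - 1) / (a ^ (s + 1) - a ^ s)) := by
    have hfac : a ^ (s + 1) - a ^ s = a ^ s * (a - 1) := by ring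
    calc ∑ i ∈ range (s + 1), (δ : ℚ) / a ^ i
        = (δ : ℚ) * ∑ i ∈ range (s + 1), a⁻¹ ^ i := by
          rw [Finset.mul_sum]
          apply Finset.sum_congr rfl
          intro i _
          rw [inv_pow, div_eq_mul_inv]
      _ = (δ : ℚ) * ((a ^ (s + 1) - 1) / (a ^ s * (a - 1))) := by
          rw [geom_aux a ha0.ne' ha1.ne']
      _ = (δ : ℚ) * ((a ^ (s + 1) - 1) / (a ^ (s + 1) - a ^ s)) := by rw [hfac]
  -- rewrite exponents in goal
  have hexp : 2 * (s + 1) - 2 = 2 * s := by omega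
  rw [hexp, hpow (s + 1), hpow s]
  -- combine
  have hchain : (n : ℚ) ≥ (ℓ : ℚ) * (r + 1) +
      ((δ : ℚ) * ((a ^ (s + 1) - 1) / (a ^ (s + 1) - a ^ s)) + ((r : ℚ) - (s + 1))) := by
    rw [← hgeom]
    calc (n : ℚ) ≥ _ := hb
      _ ≥ _ := by rw [hsplit]; linarith [h1, h2]
  rw [hℓ] at hchain
  have key : (((n : ℚ) + κ) / (2 * r) - 1) * (r + 1) +
      ((δ : ℚ) * ((a ^ (s + 1) - 1) / (a ^ (s + 1) - a ^ s)) + ((r : ℚ) - (s + 1))) =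
      (((r : ℚ) + 1) / (2 * r)) * n + (((r : ℚ) + 1) / (2 * r)) * κ +
      ((a ^ (s + 1) - 1) / (a ^ (s + 1) - a ^ s)) * δ - ((s : ℚ) + 1 + 1) := by
    field_simp
    ring
  push_cast at key ⊢
  linarith [hchain, key.ge, key.le]
end
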